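/- Let G = (V,E) be a finite simple graph and let γ be a real number with 0 < γ < 1. If S* ⊆ V is such that G[S*] is an edge-based γ-quasi-clique of maximum size s* = |S*|, then G[S*] is a k*-defective clique for k* = get-k(s*) = ⌊(1−γ)·C(s*,2)⌋, and moreover s* = solve-defect(k*), i.e., G[S*] is a maximum k*-defective clique in G. -/

import Mathlib

open Finset

/-- Number of edges of the subgraph of `G` induced by the vertex set `S`. -/
def edgesIn {V : Type*} (G : SimpleGraph V) [DecidableRel G.Adj] (S : Finset V) : ℕ :=
  ((S ×ˢ S).filter fun p => G.Adj p.1 p.2).card / 2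

/-- Degree of `u` within `S`: the number of neighbors of `u` lying in `S`. -/
def degIn {V : Type*} (G : SimpleGraph V) [DecidableRel G.Adj] (S : Finset V) (u : V) : ℕ :=
  (S.filter fun v => G.Adj u v).card

/-- `G[S]` is an edge-based γ-quasi-clique: `e(S) ≥ γ * C(|S|, 2)`. -/
def IsEQC {V : Type*} (G : SimpleGraph V) [DecidableRel G.Adj] (γ : ℝ) (S : Finset V) : Prop :=
  γ * ((S.card.choose 2 : ℕ) : ℝ) ≤ (edgesIn G S : ℝ)

/-- `G[S]` is a k-defective clique: `e(S) ≥ C(|S|, 2) - k`. -/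
def IsDefective {V : Type*} (G : SimpleGraph V) [DecidableRel G.Adj] (k : ℕ) (S : Finset V) : Prop :=
  S.card.choose 2 ≤ edgesIn G S + k

/-- `get-k(s) = ⌊(1 - γ) * C(s, 2)⌋`. -/
noncomputable def getK (γ : ℝ) (s : ℕ) : ℕ :=
  (⌊(1 - γ) * ((s.choose 2 : ℕ) : ℝ)⌋).toNat

/-- `solve-defect(k)`: the maximum size of a k-defective clique in `G`. -/
noncomputable def solveDefect {V : Type*} (G : SimpleGraph V) [DecidableRel G.Adj] (k : ℕ) : ℕ :=
  sSup {n | ∃ S : Finset V, IsDefective G k S ∧ S.card = n}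

/-- `s*`: the maximum size of an edge-based γ-quasi-clique in `G`. -/
noncomputable def sStar {V : Type*} (G : SimpleGraph V) [DecidableRel G.Adj] (γ : ℝ) : ℕ :=
  sSup {n | ∃ S : Finset V, IsEQC G γ S ∧ S.card = n}

theorem max_eqc_is_max_defective
    {V : Type*} [Fintype V] [DecidableEq V] (G : SimpleGraph V) [DecidableRel G.Adj]
    (γ : ℝ) (hγ0 : 0 < γ) (hγ1 : γ < 1)
    (S : Finset V) (hEQC : IsEQC G γ S)
    (hmax : ∀ T : Finset V, IsEQC G γ T → T.card ≤ S.card) :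
    IsDefective G (getK γ S.card) S ∧ solveDefect G (getK γ S.card) = S.card := by
  set s := S.card with hs
  set x := (1 - γ) * ((s.choose 2 : ℕ) : ℝ) with hxdef
  have hx0 : 0 ≤ x := by
    apply mul_nonneg (by linarith) (Nat.cast_nonneg _)
  have hk : ((getK γ s : ℕ) : ℤ) = ⌊x⌋ := by
    simp [getK, Int.toNat_of_nonneg (Int.floor_nonneg.2 hx0)]
    exact max_eq_left (Int.floor_nonneg.2 hx0)
  have hkx : ((getK γ s : ℕ) : ℝ) ≤ x := by
    have := Int.floor_le x
    have h2 : ((getK γ s : ℕ) : ℝ) = ((⌊x⌋ : ℤ) : ℝ) := by exact_mod_cast hk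
    linarith
  have def1 : IsDefective G (getK γ s) S := by
    unfold IsDefective
    rw [← hs]
    unfold IsEQC at hEQC
    have h1 : ((s.choose 2 : ℕ) : ℝ) - (edgesIn G S : ℝ) ≤ x := by
      rw [hxdef]; ring_nf; nlinarith
    have h2 : ((s.choose 2 : ℤ) - (edgesIn G S : ℤ)) ≤ ⌊x⌋ := by
      apply Int.le_floor.2; push_cast; linarith
    rw [← hk] at h2
    omega
  have hbound : ∀ n ∈ {n | ∃ T : Finset V, IsDefective G (getK γ s) T ∧ T.card = n}, n ≤ s := by
    rintro n ⟨T, hT, rfl⟩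
    by_contra h
    push_neg at h
    have hmono : ((s.choose 2 : ℕ) : ℝ) ≤ ((T.card.choose 2 : ℕ) : ℝ) := by
      exact_mod_cast Nat.choose_le_choose 2 h.le
    have hT' : ((T.card.choose 2 : ℕ) : ℝ) ≤ (edgesIn G T : ℝ) + ((getK γ s : ℕ) : ℝ) := by
      exact_mod_cast hT
    have heqc : IsEQC G γ T := by
      unfold IsEQC
      nlinarith
    exact absurd (hmax T heqc) (by omega)
  refine ⟨def1, le_antisymm ?_ ?_⟩
  · exact csSup_le ⟨s, S, def1, rfl⟩ hbound
  · exact le_csSup ⟨s, hbound⟩ ⟨S, def1, rfl⟩
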